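/- Let p ∈ (1/2, 1) and let μ and ν be the product measures on {0,1}^ℤ with one-dimensional marginals (1-p, p) and (p, 1-p) respectively. Define the hat map h : {0,1}^ℤ → {0,1}^ℤ by h(x)_i = 1 if the coordinate i lies in a primary marker of x, i.e. if (x_i = 0 and x_{i+1} = 1) or (x_{i-1} = 0 and x_i = 1), and h(x)_i = 0 otherwise. Then the pushforward of μ under h equals the pushforward of ν under h; that is, the law of the primary marker process is the same under μ and ν. -/

import Mathlib

open MeasureTheory

/-- `μ` is the law of the Bernoulli shift whose coordinates are i.i.d. taking the value
`1` (`true`) with probability `p` and `0` (`false`) with probability `1 - p`. -/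
def IsBernoulliShift (p : ℝ) (μ : Measure (ℤ → Bool)) : Prop :=
  IsProbabilityMeasure μ ∧
    ∀ (s : Finset ℤ) (f : ℤ → Bool),
      μ {x | ∀ i ∈ s, x i = f i} =
        ENNReal.ofReal (∏ i ∈ s, if f i then p else 1 - p)

/-- The hat map: `h(x)_i = 1` iff coordinate `i` lies in a primary marker of `x`,
i.e. iff (`x_i = 0` and `x_{i+1} = 1`) or (`x_{i-1} = 0` and `x_i = 1`). -/
def hatMap (x : ℤ → Bool) : ℤ → Bool := fun i =>
  (!x i && x (i + 1)) || (!x (i - 1) && x i)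

namespace HatAux

/-- Pending-constraint check. -/
def pendOK : Option Bool → Bool → Bool
  | none, _ => true
  | some v, o => o == v

/-- One transfer step of the constrained partition function. -/
noncomputable def Gstep (tail : Bool → Option Bool → ℝ) (c pending : Option Bool)
    (last b : Bool) : ℝ :=
  if pendOK pending (!last && b) then
    match c, (!last && b) with
    | none, _ => tail b none
    | some fv, true => if fv then tail b none else 0
    | some fv, false => tail b (some fv)
  else 0

lemma Gstep_none (tail : Bool → Option Bool → ℝ) (pending : Option Bool) (last b : Bool) :
    Gstep tail none pending last b =
      if pendOK pending (!last && b) then tail b none else 0 := by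
  unfold Gstep; cases h : (!last && b) <;> simp [h]

lemma Gstep_some (tail : Bool → Option Bool → ℝ) (fv : Bool) (pending : Option Bool)
    (last b : Bool) :
    Gstep tail (some fv) pending last b =
      if pendOK pending (!last && b) then
        (if (!last && b) then (if fv then tail b none else 0) else tail b (some fv))
      else 0 := by
  unfold Gstep; cases h : (!last && b) <;> simp [h]

/-- The constraint at position `j`. -/
def con (s : Finset ℤ) (f : ℤ → Bool) (j : ℤ) : Option Bool :=
  if j ∈ s then some (f j) else none

/-- The constrained partition function. -/
noncomputable def G (P Q : ℝ) (s : Finset ℤ) (f : ℤ → Bool) :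
    ℕ → ℤ → Bool → Option Bool → ℝ
  | 0, _, _, pending => if pending = some true then 0 else 1
  | k+1, j, last, pending =>
      P * Gstep (fun b pd => G P Q s f k (j+1) b pd) (con s f j) pending last true
    + Q * Gstep (fun b pd => G P Q s f k (j+1) b pd) (con s f j) pending last false

lemma G_zero (P Q : ℝ) (s : Finset ℤ) (f : ℤ → Bool) (j : ℤ) (last : Bool)
    (pending : Option Bool) :
    G P Q s f 0 j last pending = if pending = some true then 0 else 1 := rfl

lemma G_succ (P Q : ℝ) (s : Finset ℤ) (f : ℤ → Bool) (k : ℕ) (j : ℤ) (last : Bool)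
    (pending : Option Bool) :
    G P Q s f (k+1) j last pending =
      P * Gstep (fun b pd => G P Q s f k (j+1) b pd) (con s f j) pending last true
    + Q * Gstep (fun b pd => G P Q s f k (j+1) b pd) (con s f j) pending last false := rfl

lemma Gstep_true_someTrue (tail : Bool → Option Bool → ℝ) (c : Option Bool) (b : Bool) :
    Gstep tail c (some true) true b = 0 := by
  unfold Gstep; simp [pendOK]

lemma Gtt (P Q : ℝ) (s : Finset ℤ) (f : ℤ → Bool) (k : ℕ) (j : ℤ) :
    G P Q s f k j true (some true) = 0 := by
  cases k with
  | zero => simp [G_zero]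
  | succ k => simp [G_succ, Gstep_true_someTrue]

lemma Gstep_true_someFalse (tail : Bool → Option Bool → ℝ) (c : Option Bool) (b : Bool) :
    Gstep tail c (some false) true b = Gstep tail c none true b := by
  unfold Gstep; simp [pendOK]

lemma Gtf (P Q : ℝ) (s : Finset ℤ) (f : ℤ → Bool) (k : ℕ) (j : ℤ) :
    G P Q s f k j true (some false) = G P Q s f k j true none := by
  cases k with
  | zero => simp [G_zero]
  | succ k => simp [G_succ, Gstep_true_someFalse]

/-- The key invariant system, preserved by every transfer step. -/
lemma inv (P Q : ℝ) (s : Finset ℤ) (f : ℤ → Bool) : ∀ (k : ℕ) (j : ℤ),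
    (G P Q s f k j false none
      = G P Q s f k j false (some true) + G P Q s f k j false (some false))
  ∧ (G Q P s f k j false none
      = G Q P s f k j false (some true) + G Q P s f k j false (some false))
  ∧ (Q * G P Q s f k j false (some true) = P * G Q P s f k j false (some true))
  ∧ (P * G Q P s f k j false none
      = (P - Q) * G P Q s f k j true none + Q * G P Q s f k j false none)
  ∧ (G P Q s f k j true none = G Q P s f k j true none) := by
  intro k
  induction k with
  | zero =>
      intro j
      refine ⟨?_, ?_, ?_, ?_, ?_⟩ <;> simp [G_zero] <;> ring1
  | succ k ih =>
      intro j
      obtain ⟨ihB, ihBs, ihBt, ihMix, ihA⟩ := ih (j+1)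
      by_cases hjs : j ∈ s
      · cases hfj : f j <;>
        · refine ⟨?_, ?_, ?_, ?_, ?_⟩ <;>
            simp [G_succ, Gstep_none, Gstep_some, con, hjs, hfj, pendOK, Gtt, Gtf] <;>
            (try simp only [add_comm (1:ℤ) j]) <;>
            first
            | ring1
            | linear_combination P*Q*ihA
            | linear_combination ihBt + P*Q*ihA
            | linear_combination ihBt - P*Q*ihA
            | linear_combination ihBt
            | linear_combination -(P*Q)*ihA - P*ihBt
            | linear_combination P*ihMix + P*Q*ihA
            | linear_combination P*ihMix - P*Q*ihA
            | linear_combination Q*ihA - ihMix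
            | linear_combination (-(P^2))*ihBs + P*ihMix + P*ihBt + (P*Q)*ihB
            | linear_combination Q*ihA + P*ihBs - ihMix - ihBt - Q*ihB
      · refine ⟨?_, ?_, ?_, ?_, ?_⟩ <;>
          simp [G_succ, Gstep_none, Gstep_some, con, hjs, pendOK, Gtt, Gtf] <;>
          (try simp only [add_comm (1:ℤ) j]) <;>
          first
          | ring1
          | linear_combination P*Q*ihA
          | linear_combination P*ihMix + P*Q*ihA
          | linear_combination P*ihMix - P*Q*ihA
          | linear_combination Q*ihA - ihMix

/-- Symmetry of the total partition function under the swap `P ↔ Q`. -/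
lemma symTot (P Q : ℝ) (s : Finset ℤ) (f : ℤ → Bool) (k : ℕ) (j : ℤ) :
    P * G P Q s f k j true none + Q * G P Q s f k j false none
      = Q * G Q P s f k j true none + P * G Q P s f k j false none := by
  obtain ⟨ihB, ihBs, ihBt, ihMix, ihA⟩ := inv P Q s f k j
  linear_combination Q*ihA - ihMix

lemma Gstep_nonneg (tail : Bool → Option Bool → ℝ) (h : ∀ b pd, 0 ≤ tail b pd)
    (c pending : Option Bool) (last b : Bool) : 0 ≤ Gstep tail c pending last b := by
  rcases c with _ | fv
  · rw [Gstep_none]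
    split
    · exact h _ _
    · exact le_rfl
  · rw [Gstep_some]
    split
    · split
      · split
        · exact h _ _
        · exact le_rfl
      · exact h _ _
    · exact le_rfl

lemma G_nonneg (P Q : ℝ) (hP : 0 ≤ P) (hQ : 0 ≤ Q) (s : Finset ℤ) (f : ℤ → Bool) :
    ∀ (k : ℕ) (j : ℤ) (last : Bool) (pending : Option Bool),
      0 ≤ G P Q s f k j last pending := by
  intro k
  induction k with
  | zero =>
      intro j last pending
      rw [G_zero]; split <;> norm_num
  | succ k ih =>
      intro j last pending
      rw [G_succ]
      have h1 := Gstep_nonneg (fun b pd => G P Q s f k (j+1) b pd)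
        (fun b pd => ih (j+1) b pd) (con s f j) pending last true
      have h2 := Gstep_nonneg (fun b pd => G P Q s f k (j+1) b pd)
        (fun b pd => ih (j+1) b pd) (con s f j) pending last false
      positivity

/-! ### Measure-theoretic side -/

/-- The cylinder set fixing the coordinates on `u` to be `g`. -/
def cylE (u : Finset ℤ) (g : ℤ → Bool) : Set (ℤ → Bool) := {x | ∀ i ∈ u, x i = g i}

/-- Tail event. -/
def Etail (s : Finset ℤ) (f : ℤ → Bool) (j : ℤ) (last : Bool) (pending : Option Bool) :
    Set (ℤ → Bool) :=
  {x | (∀ v, pending = some v → (!last && x j) = v) ∧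
    ∀ i ∈ s, j ≤ i → hatMap x i = f i}

lemma measurableSet_coord (i : ℤ) (b : Bool) :
    MeasurableSet {x : ℤ → Bool | x i = b} := by
  show MeasurableSet ((fun x : ℤ → Bool => x i) ⁻¹' {b})
  exact (measurable_pi_apply i) (measurableSet_singleton b)

lemma measurable_hatMap : Measurable hatMap := by
  rw [measurable_pi_iff]
  intro i
  have h : Measurable fun x : ℤ → Bool => (x (i-1), x i, x (i+1)) :=
    (measurable_pi_apply _).prodMk ((measurable_pi_apply _).prodMk (measurable_pi_apply _))
  exact (Measurable.of_discrete
    (f := fun t : Bool × Bool × Bool => (!t.2.1 && t.2.2) || (!t.1 && t.2.1))).comp h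

lemma measurableSet_cylE (u : Finset ℤ) (g : ℤ → Bool) : MeasurableSet (cylE u g) := by
  have : cylE u g = ⋂ i ∈ u, {x : ℤ → Bool | x i = g i} := by
    ext x; simp [cylE]
  rw [this]
  exact MeasurableSet.biInter u.countable_toSet fun i _ => measurableSet_coord i (g i)

lemma measurableSet_Etail (s : Finset ℤ) (f : ℤ → Bool) (j : ℤ) (last : Bool)
    (pending : Option Bool) : MeasurableSet (Etail s f j last pending) := by
  have h1 : MeasurableSet {x : ℤ → Bool | ∀ v, pending = some v → (!last && x j) = v} := by
    rcases pending with _ | v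
    · convert MeasurableSet.univ
      ext x; simp
    · have he : {x : ℤ → Bool | ∀ w, (some v : Option Bool) = some w → (!last && x j) = w}
          = (fun x : ℤ → Bool => !last && x j) ⁻¹' {v} := by
        ext x; simp
      rw [he]
      exact ((Measurable.of_discrete (f := fun c : Bool => !last && c)).comp
        (measurable_pi_apply j)) (measurableSet_singleton v)
  have h2 : MeasurableSet {x : ℤ → Bool | ∀ i ∈ s, j ≤ i → hatMap x i = f i} := by
    have he : {x : ℤ → Bool | ∀ i ∈ s, j ≤ i → hatMap x i = f i}
        = ⋂ i ∈ s, ⋂ (_ : j ≤ i), (fun x : ℤ → Bool => hatMap x i) ⁻¹' {f i} := by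
      ext x; simp
    rw [he]
    refine MeasurableSet.biInter s.countable_toSet fun i _ =>
      MeasurableSet.iInter fun _ => ?_
    exact ((measurable_pi_apply i).comp measurable_hatMap) (measurableSet_singleton (f i))
  exact h1.inter h2

/-- The main computation. -/
lemma meas_main {μ : Measure (ℤ → Bool)} {P : ℝ} (s : Finset ℤ) (f : ℤ → Bool)
    (hP0 : 0 ≤ P) (hP1 : P ≤ 1)
    (hcyl : ∀ (u : Finset ℤ) (g : ℤ → Bool),
      μ (cylE u g) = ENNReal.ofReal (∏ i ∈ u, if g i then P else 1 - P)) :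
    ∀ (k : ℕ) (j : ℤ) (u : Finset ℤ) (g : ℤ → Bool) (last : Bool) (pending : Option Bool),
      g (j-1) = last → (j - 1) ∈ u → (∀ i ∈ u, i ≤ j - 1) →
      (∀ i ∈ s, i + 1 < j + (k : ℤ)) →
      (pending ≠ none → j - 1 ∈ s) →
      μ (cylE u g ∩ Etail s f j last pending)
        = ENNReal.ofReal ((∏ i ∈ u, if g i then P else 1 - P) *
            G P (1-P) s f k j last pending) := by
  have h1P : (0:ℝ) ≤ 1 - P := by linarith
  intro k
  induction k with
  | zero =>
      intro j u g last pending hlast hju hu hw hp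
      have hpend : pending = none := by
        rcases pending with _ | v
        · rfl
        · exact absurd (hw _ (hp (by simp))) (by omega)
      subst hpend
      have hE : Etail s f j last none = Set.univ := Set.eq_univ_of_forall fun x =>
        show (∀ v, (none : Option Bool) = some v → (!last && x j) = v) ∧
            (∀ i ∈ s, j ≤ i → hatMap x i = f i) from
          ⟨fun v hv => (nomatch hv), fun i hi hji => absurd (hw i hi) (by omega)⟩
      rw [hE, Set.inter_univ, hcyl u g, G_zero]
      simp
  | succ k ih =>
      intro j u g last pending hlast hju hu hw hp
      have hjnotu : j ∉ u := fun h => by have := hu j h; omega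
      have key : ∀ b : Bool,
          μ (cylE u g ∩ Etail s f j last pending ∩ {x | x j = b})
            = ENNReal.ofReal ((∏ i ∈ u, if g i then P else 1 - P) *
                ((if b then P else 1 - P) *
                  Gstep (fun b' pd => G P (1-P) s f k (j+1) b' pd)
                    (con s f j) pending last b)) := by
        intro b
        by_cases hpo : pendOK pending (!last && b) = true
        · -- pending check passes
          have step1 : ∀ pd : Option Bool, (pd ≠ none → j ∈ s) →
              (∀ x : ℤ → Bool, x (j-1) = last → x j = b →
                (((∀ v, pending = some v → (!last && x j) = v) ∧
                    (∀ i ∈ s, j ≤ i → hatMap x i = f i)) ↔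
                  ((∀ v, pd = some v → (!b && x (j+1)) = v) ∧
                    (∀ i ∈ s, j + 1 ≤ i → hatMap x i = f i)))) →
              μ (cylE u g ∩ Etail s f j last pending ∩ {x | x j = b})
                = ENNReal.ofReal ((∏ i ∈ u, if g i then P else 1 - P) *
                    ((if b then P else 1 - P) * G P (1-P) s f k (j+1) b pd)) := by
            intro pd hpd hiff
            have hg'j : Function.update g j b j = b := Function.update_self j b g
            have hg'u : ∀ i ∈ u, Function.update g j b i = g i := fun i hi =>
              Function.update_of_ne (by have := hu i hi; omega) b g
            have hsets : cylE u g ∩ Etail s f j last pending ∩ {x | x j = b}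
                = cylE (insert j u) (Function.update g j b) ∩ Etail s f (j+1) b pd := by
              ext x
              simp only [Set.mem_inter_iff, Set.mem_setOf_eq, cylE, Etail]
              constructor
              · rintro ⟨⟨hcy, hpend, htail⟩, hxj⟩
                have hx1 : x (j-1) = last := by rw [hcy _ hju, hlast]
                obtain ⟨h1, h2⟩ := (hiff x hx1 hxj).mp ⟨hpend, htail⟩
                refine ⟨?_, h1, h2⟩
                intro i hi
                rcases Finset.mem_insert.mp hi with rfl | hiu
                · rw [hxj, hg'j]
                · rw [hg'u i hiu]; exact hcy i hiu
              · rintro ⟨hcy, hpend', htail'⟩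
                have hxj : x j = b := by
                  have h := hcy j (Finset.mem_insert_self j u); rwa [hg'j] at h
                have hx1 : x (j-1) = last := by
                  have h := hcy (j-1) (Finset.mem_insert_of_mem hju)
                  rwa [Function.update_of_ne (by omega) b g, hlast] at h
                exact ⟨⟨fun i hi => by
                    rw [← hg'u i hi]; exact hcy i (Finset.mem_insert_of_mem hi),
                  (hiff x hx1 hxj).mpr ⟨hpend', htail'⟩⟩, hxj⟩
            rw [hsets]
            rw [ih (j+1) (insert j u) (Function.update g j b) b pd
                (by rw [show j + 1 - 1 = j from by ring]; exact hg'j)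
                (by rw [show j + 1 - 1 = j from by ring]; exact Finset.mem_insert_self j u)
                (by intro i hi
                    rcases Finset.mem_insert.mp hi with rfl | hiu
                    · omega
                    · have := hu i hiu; omega)
                (by intro i hi; have := hw i hi; push_cast at this ⊢; omega)
                (fun hne => by
                  rw [show j + 1 - 1 = j from by ring]; exact hpd hne)]
            have hpr : ∏ i ∈ insert j u, (if Function.update g j b i then P else 1 - P)
                = (if b then P else 1 - P) * ∏ i ∈ u, (if g i then P else 1 - P) := by
              rw [Finset.prod_insert hjnotu, hg'j]
              congr 1
              exact Finset.prod_congr rfl fun i hi => by rw [hg'u i hi]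
            rw [hpr]
            congr 1
            ring
          by_cases hjs : j ∈ s
          · have hcon : con s f j = some (f j) := by simp [con, hjs]
            cases hob : (!last && b)
            · -- occurrence indicator false
              have hgstep : Gstep (fun b' pd => G P (1-P) s f k (j+1) b' pd)
                  (con s f j) pending last b = G P (1-P) s f k (j+1) b (some (f j)) := by
                rw [hcon, Gstep_some, if_pos hpo, hob]
                simp
              rw [hgstep]
              refine step1 (some (f j)) (fun _ => hjs) ?_
              intro x hx1 hxj
              have hhat : hatMap x j = ((!b && x (j+1)) || (!last && b)) := by
                show ((!x j && x (j + 1)) || (!x (j - 1) && x j)) = _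
                rw [hx1, hxj]
              constructor
              · rintro ⟨hpend, htail⟩
                refine ⟨?_, fun i hi hji => htail i hi (by omega)⟩
                intro v hv
                injection hv with hv2
                subst hv2
                have h := htail j hjs le_rfl
                rw [hhat, hob, Bool.or_false] at h
                exact h
              · rintro ⟨hpend', htail'⟩
                constructor
                · intro v hv
                  rw [hv] at hpo
                  simp only [pendOK, beq_iff_eq] at hpo
                  rw [hxj]; exact hpo
                · intro i hi hji
                  rcases eq_or_lt_of_le hji with heq | hlt
                  · subst heq
                    have h := hpend' (f j) rfl
                    rw [hhat, hob, Bool.or_false]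
                    exact h
                  · exact htail' i hi (by omega)
            · -- occurrence indicator true
              cases hfj : f j
              · -- f j = false: empty
                have hgstep : Gstep (fun b' pd => G P (1-P) s f k (j+1) b' pd)
                    (con s f j) pending last b = 0 := by
                  rw [hcon, Gstep_some, if_pos hpo, hob, hfj]
                  simp
                rw [hgstep]
                have hempty : cylE u g ∩ Etail s f j last pending ∩ {x | x j = b} = ∅ := by
                  ext x
                  simp only [Set.mem_inter_iff, Set.mem_setOf_eq, cylE, Etail,
                    Set.mem_empty_iff_false, iff_false, not_and]
                  rintro ⟨hcy, hpend, htail⟩ hxj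
                  have hx1 : x (j-1) = last := by rw [hcy _ hju, hlast]
                  have h := htail j hjs le_rfl
                  have hh : hatMap x j = true := by
                    show ((!x j && x (j + 1)) || (!x (j - 1) && x j)) = true
                    rw [hx1, hxj, hob, Bool.or_true]
                  rw [hh, hfj] at h
                  exact Bool.noConfusion h
                rw [hempty]
                simp
              · -- f j = true
                have hgstep : Gstep (fun b' pd => G P (1-P) s f k (j+1) b' pd)
                    (con s f j) pending last b = G P (1-P) s f k (j+1) b none := by
                  rw [hcon, Gstep_some, if_pos hpo, hob, hfj]
                  simp
                rw [hgstep]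
                refine step1 none (fun h => absurd rfl h) ?_
                intro x hx1 hxj
                have hhat : hatMap x j = ((!b && x (j+1)) || (!last && b)) := by
                  show ((!x j && x (j + 1)) || (!x (j - 1) && x j)) = _
                  rw [hx1, hxj]
                constructor
                · rintro ⟨hpend, htail⟩
                  exact ⟨fun v hv => (nomatch hv), fun i hi hji => htail i hi (by omega)⟩
                · rintro ⟨hpend', htail'⟩
                  constructor
                  · intro v hv
                    rw [hv] at hpo
                    simp only [pendOK, beq_iff_eq] at hpo
                    rw [hxj]; exact hpo
                  · intro i hi hji
                    rcases eq_or_lt_of_le hji with heq | hlt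
                    · subst heq
                      rw [hhat, hob, Bool.or_true, hfj]
                    · exact htail' i hi (by omega)
          · -- j ∉ s
            have hcon : con s f j = none := by simp [con, hjs]
            have hgstep : Gstep (fun b' pd => G P (1-P) s f k (j+1) b' pd)
                (con s f j) pending last b = G P (1-P) s f k (j+1) b none := by
              rw [hcon, Gstep_none, if_pos hpo]
            rw [hgstep]
            refine step1 none (fun h => absurd rfl h) ?_
            intro x hx1 hxj
            constructor
            · rintro ⟨hpend, htail⟩
              exact ⟨fun v hv => (nomatch hv), fun i hi hji => htail i hi (by omega)⟩
            · rintro ⟨hpend', htail'⟩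
              constructor
              · intro v hv
                rw [hv] at hpo
                simp only [pendOK, beq_iff_eq] at hpo
                rw [hxj]; exact hpo
              · intro i hi hji
                have hne : i ≠ j := fun h => hjs (h ▸ hi)
                exact htail' i hi (by omega)
        · -- pending check fails
          have hgstep : Gstep (fun b' pd => G P (1-P) s f k (j+1) b' pd)
              (con s f j) pending last b = 0 := by
            unfold Gstep
            exact if_neg hpo
          rw [hgstep]
          have hempty : cylE u g ∩ Etail s f j last pending ∩ {x | x j = b} = ∅ := by
            ext x
            simp only [Set.mem_inter_iff, Set.mem_setOf_eq, cylE, Etail,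
              Set.mem_empty_iff_false, iff_false, not_and]
            rintro ⟨hcy, hpend, htail⟩ hxj
            rcases pending with _ | v
            · exact hpo rfl
            · apply hpo
              have h := hpend v rfl
              rw [hxj] at h
              simp [pendOK, h]
          rw [hempty]
          simp
      -- combine the two values of x j
      have hAm : MeasurableSet {x : ℤ → Bool | x j = true} := measurableSet_coord j true
      have hsp := measure_inter_add_diff (μ := μ) (cylE u g ∩ Etail s f j last pending) hAm
      have hdf : (cylE u g ∩ Etail s f j last pending) \ {x | x j = true}
          = cylE u g ∩ Etail s f j last pending ∩ {x | x j = false} := by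
        ext x
        simp [Set.mem_diff, Bool.not_eq_true]
      rw [hdf, key true, key false] at hsp
      have hGn := G_nonneg P (1-P) hP0 h1P s f
      have hstepT := Gstep_nonneg (fun b pd => G P (1-P) s f k (j+1) b pd)
        (fun b pd => hGn k (j+1) b pd) (con s f j) pending last true
      have hstepF := Gstep_nonneg (fun b pd => G P (1-P) s f k (j+1) b pd)
        (fun b pd => hGn k (j+1) b pd) (con s f j) pending last false
      have hprodn : 0 ≤ ∏ i ∈ u, if g i then P else 1 - P := by
        apply Finset.prod_nonneg
        intro i _
        split
        · exact hP0
        · exact h1P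
      have hT1 : (0:ℝ) ≤ (∏ i ∈ u, if g i then P else 1 - P) *
          ((if (true : Bool) then P else 1 - P) *
            Gstep (fun b' pd => G P (1-P) s f k (j+1) b' pd) (con s f j) pending last true) := by
        apply mul_nonneg hprodn
        apply mul_nonneg _ hstepT
        simp [hP0]
      have hT2 : (0:ℝ) ≤ (∏ i ∈ u, if g i then P else 1 - P) *
          ((if (false : Bool) then P else 1 - P) *
            Gstep (fun b' pd => G P (1-P) s f k (j+1) b' pd) (con s f j) pending last false) := by
        apply mul_nonneg hprodn
        apply mul_nonneg _ hstepF
        simp [h1P]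
      rw [← hsp, ← ENNReal.ofReal_add hT1 hT2]
      congr 1
      rw [G_succ]
      simp only [reduceIte, Bool.false_eq_true, if_false]
      ring1

end HatAux

section Assemble

open HatAux

lemma gen_eq : (inferInstance : MeasurableSpace (ℤ → Bool)) =
    MeasurableSpace.generateFrom {A | ∃ (t : Finset ℤ) (g : ℤ → Bool), A = cylE t g} := by
  apply le_antisymm
  · show MeasurableSpace.pi ≤ _
    refine iSup_le fun i => ?_
    intro S hS
    obtain ⟨s, -, rfl⟩ := hS
    have he : (fun x : ℤ → Bool => x i) ⁻¹' s = ⋃ b ∈ s, {x : ℤ → Bool | x i = b} := by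
      ext x
      simp only [Set.mem_preimage, Set.mem_iUnion, Set.mem_setOf_eq]
      exact ⟨fun h => ⟨x i, h, rfl⟩, fun ⟨b, hb, he⟩ => he ▸ hb⟩
    rw [he]
    refine MeasurableSet.biUnion s.to_countable fun b _ => ?_
    exact MeasurableSpace.measurableSet_generateFrom
      ⟨{i}, fun _ => b, by ext x; simp [cylE]⟩
  · apply MeasurableSpace.generateFrom_le
    rintro A ⟨t, g, rfl⟩
    exact measurableSet_cylE t g

lemma piSystem_cyl :
    IsPiSystem {A : Set (ℤ → Bool) | ∃ (t : Finset ℤ) (g : ℤ → Bool), A = cylE t g} := by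
  rintro A ⟨t1, g1, rfl⟩ B ⟨t2, g2, rfl⟩ ⟨x₀, hx₀⟩
  have h1 : ∀ i ∈ t1, x₀ i = g1 i := hx₀.1
  have h2 : ∀ i ∈ t2, x₀ i = g2 i := hx₀.2
  refine ⟨t1 ∪ t2, x₀, ?_⟩
  ext x
  simp only [cylE, Set.mem_inter_iff, Set.mem_setOf_eq, Finset.mem_union]
  constructor
  · rintro ⟨ha, hb⟩ i hi
    rcases hi with h | h
    · rw [ha i h, ← h1 i h]
    · rw [hb i h, ← h2 i h]
  · intro h
    constructor
    · intro i hi; rw [h i (Or.inl hi), h1 i hi]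
    · intro i hi; rw [h i (Or.inr hi), h2 i hi]

/-- The measure of a hat-cylinder event, via `G`. -/
lemma measure_hat_event {μ : Measure (ℤ → Bool)} {P : ℝ} (hP0 : 0 ≤ P) (hP1 : P ≤ 1)
    (hcyl : ∀ (u : Finset ℤ) (g : ℤ → Bool),
      μ (cylE u g) = ENNReal.ofReal (∏ i ∈ u, if g i then P else 1 - P))
    (t : Finset ℤ) (f : ℤ → Bool) (ht : t.Nonempty) (k : ℕ)
    (hk : ∀ i ∈ t, i + 1 < t.min' ht + (k : ℤ)) :
    μ {x | ∀ i ∈ t, hatMap x i = f i}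
      = ENNReal.ofReal (P * G P (1-P) t f k (t.min' ht) true none
          + (1-P) * G P (1-P) t f k (t.min' ht) false none) := by
  set j0 := t.min' ht with hj0
  have hsplit : {x : ℤ → Bool | ∀ i ∈ t, hatMap x i = f i}
      = (cylE {j0 - 1} (fun _ => true) ∩ Etail t f j0 true none)
        ∪ (cylE {j0 - 1} (fun _ => false) ∩ Etail t f j0 false none) := by
    ext x
    simp only [cylE, Etail, Set.mem_union, Set.mem_inter_iff, Set.mem_setOf_eq,
      Finset.mem_singleton]
    constructor
    · intro hx
      cases hxb : x (j0 - 1)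
      · right
        exact ⟨fun i hi => by rw [hi]; exact hxb,
          ⟨fun v hv => (nomatch hv), fun i hi _ => hx i hi⟩⟩
      · left
        exact ⟨fun i hi => by rw [hi]; exact hxb,
          ⟨fun v hv => (nomatch hv), fun i hi _ => hx i hi⟩⟩
    · rintro (⟨hcy, _, htail⟩ | ⟨hcy, _, htail⟩) <;>
        exact fun i hi => htail i hi (t.min'_le i hi)
  have hdisj : Disjoint (cylE {j0 - 1} (fun _ => true) ∩ Etail t f j0 true none)
      (cylE {j0 - 1} (fun _ => false) ∩ Etail t f j0 false none) := by
    rw [Set.disjoint_left]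
    rintro x ⟨hc1, _⟩ ⟨hc2, _⟩
    have e1 := hc1 (j0 - 1) (Finset.mem_singleton_self _)
    have e2 := hc2 (j0 - 1) (Finset.mem_singleton_self _)
    rw [e1] at e2
    exact Bool.noConfusion e2
  have hm2 : MeasurableSet (cylE {j0 - 1} (fun _ => false) ∩ Etail t f j0 false none) :=
    (measurableSet_cylE _ _).inter (measurableSet_Etail _ _ _ _ _)
  rw [hsplit, measure_union hdisj hm2]
  have happ : ∀ b : Bool, μ (cylE {j0 - 1} (fun _ => b) ∩ Etail t f j0 b none)
      = ENNReal.ofReal ((if b then P else 1 - P) * G P (1-P) t f k j0 b none) := by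
    intro b
    have h := meas_main t f hP0 hP1 hcyl k j0 {j0 - 1} (fun _ => b) b none
      rfl (Finset.mem_singleton_self _) (fun i hi => by
        rw [Finset.mem_singleton] at hi; omega)
      (fun i hi => hk i hi) (fun h => absurd rfl h)
    rw [h, Finset.prod_singleton]
  rw [happ true, happ false]
  rw [← ENNReal.ofReal_add]
  · simp
  · apply mul_nonneg (by simp [hP0])
    exact G_nonneg P (1-P) hP0 (by linarith) t f k j0 true none
  · apply mul_nonneg (by simp; linarith)
    exact G_nonneg P (1-P) hP0 (by linarith) t f k j0 false none

end Assemble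

/-- For `p ∈ (1/2, 1)`, the law of the primary marker process is the same under
`μ = (1-p, p)^ℤ` and `ν = (p, 1-p)^ℤ`: the pushforwards under the hat map agree. -/
theorem hatMap_pushforward_eq (p : ℝ) (hp : 1 / 2 < p) (hp1 : p < 1)
    (μ ν : Measure (ℤ → Bool))
    (hμ : IsBernoulliShift p μ) (hν : IsBernoulliShift (1 - p) ν) :
    μ.map hatMap = ν.map hatMap := by
  classical
  obtain ⟨hμp, hμc⟩ := hμ
  obtain ⟨hνp, hνc⟩ := hν
  have hmeas := HatAux.measurable_hatMap
  haveI := hμp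
  haveI := hνp
  haveI h1 : IsProbabilityMeasure (μ.map hatMap) :=
    Measure.isProbabilityMeasure_map hmeas.aemeasurable
  haveI h2 : IsProbabilityMeasure (ν.map hatMap) :=
    Measure.isProbabilityMeasure_map hmeas.aemeasurable
  have hp0 : (0:ℝ) ≤ p := by linarith
  have hp0' : (0:ℝ) ≤ 1 - p := by linarith
  have hcylμ : ∀ (u : Finset ℤ) (g : ℤ → Bool),
      μ (HatAux.cylE u g) = ENNReal.ofReal (∏ i ∈ u, if g i then p else 1 - p) :=
    fun u g => hμc u g
  have hcylν : ∀ (u : Finset ℤ) (g : ℤ → Bool),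
      ν (HatAux.cylE u g) = ENNReal.ofReal (∏ i ∈ u, if g i then (1-p) else 1 - (1-p)) :=
    fun u g => hνc u g
  apply ext_of_generate_finite
    {A : Set (ℤ → Bool) | ∃ (t : Finset ℤ) (g : ℤ → Bool), A = HatAux.cylE t g}
    gen_eq piSystem_cyl
  · rintro A ⟨t, f, rfl⟩
    rw [Measure.map_apply hmeas (HatAux.measurableSet_cylE t f),
        Measure.map_apply hmeas (HatAux.measurableSet_cylE t f)]
    have hpre : hatMap ⁻¹' HatAux.cylE t f = {x | ∀ i ∈ t, hatMap x i = f i} := rfl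
    rw [hpre]
    rcases t.eq_empty_or_nonempty with rfl | ht
    · have : {x : ℤ → Bool | ∀ i ∈ (∅ : Finset ℤ), hatMap x i = f i} = Set.univ := by
        ext x; simp
      rw [this]
      simp
    · set k : ℕ := (t.max' ht + 2 - t.min' ht).toNat with hkdef
      have hkz : (k : ℤ) = t.max' ht + 2 - t.min' ht := by
        rw [hkdef]
        obtain ⟨i, hi⟩ := id ht
        have ha := t.min'_le i hi
        have hb := t.le_max' i hi
        exact Int.toNat_of_nonneg (by omega)
      have hk : ∀ i ∈ t, i + 1 < t.min' ht + (k : ℤ) := by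
        intro i hi
        have h1 := Finset.le_max' t i hi
        omega
      rw [measure_hat_event hp0 (le_of_lt hp1) hcylμ t f ht k hk,
          measure_hat_event hp0' (by linarith) hcylν t f ht k hk]
      rw [show (1:ℝ) - (1 - p) = p from by ring]
      congr 1
      exact HatAux.symTot p (1-p) t f k (t.min' ht)
  · simp
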